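/- Let n = 2ν+1 be odd with ν ≥ 2 and let λ be any eigenvalue of the Laplacian matrix L(F_2(C_n)) regarded as a complex matrix. Then there exist an n-th root of unity ζ ∈ ℂ and a nonzero vector f = (f₁,…,f_ν) ∈ ℂ^ν with B(ζ)f = λf, such that the vector y ∈ ℂ^{V(F_2(C_n))} defined on each 2-subset of ℤ/nℤ written uniquely as {j, j+h} with j ∈ ℤ/nℤ and h ∈ {1,…,ν} by y_{{j, j+h}} = f_h·ζ^j, is nonzero and satisfies L(F_2(C_n))·y = λ·y. -/

import Mathlib

open Finset Polynomial Real Matrix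

noncomputable section

/-- The `k`-token graph of a simple graph `G`. -/
def tokenGraph {V : Type*} [DecidableEq V] (G : SimpleGraph V) (k : ℕ) :
    SimpleGraph {s : Finset V // s.card = k} where
  Adj A B := ∃ a b, G.Adj a b ∧ a ∈ A.1 ∧ b ∈ B.1 ∧ symmDiff A.1 B.1 = {a, b}
  symm := ⟨by
    rintro A B ⟨a, b, hab, ha, hb, hd⟩
    exact ⟨b, a, hab.symm, hb, ha, by rw [symmDiff_comm, hd, Finset.pair_comm]⟩⟩
  loopless := ⟨by
    rintro A ⟨a, b, hab, ha, hb, hd⟩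
    rw [symmDiff_self, Finset.bot_eq_empty] at hd
    exact (Finset.insert_ne_empty a {b}) hd.symm⟩

/-- The Laplacian matrix (over ℝ) of a finite simple graph. -/
def lapMat {V : Type*} [Fintype V] [DecidableEq V] (G : SimpleGraph V) : Matrix V V ℝ :=
  letI := Classical.decRel G.Adj
  G.lapMatrix ℝ

/-- The Laplacian matrix (over ℂ) of a finite simple graph. -/
def lapMatC {V : Type*} [Fintype V] [DecidableEq V] (G : SimpleGraph V) : Matrix V V ℂ :=
  letI := Classical.decRel G.Adj
  G.lapMatrix ℂ

/-- The Laplacian eigenvalues of `G`, with multiplicity, in nondecreasing order. -/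
def lapSpec {V : Type*} [Fintype V] [DecidableEq V] (G : SimpleGraph V) : List ℝ :=
  ((lapMat G).charpoly.roots).sort (· ≤ ·)

/-- The algebraic connectivity: the second-smallest Laplacian eigenvalue. -/
def algConn {V : Type*} [Fintype V] [DecidableEq V] (G : SimpleGraph V) : ℝ :=
  (lapSpec G).getD 1 0

/-- The largest Laplacian eigenvalue (Laplacian spectral radius). -/
def lapSpecRadius {V : Type*} [Fintype V] [DecidableEq V] (G : SimpleGraph V) : ℝ :=
  (lapSpec G).getLastD 0

/-- `μ` is an eigenvalue of the Laplacian matrix of `G`. -/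
def IsLapEigen {V : Type*} [Fintype V] [DecidableEq V] (G : SimpleGraph V) (μ : ℝ) : Prop :=
  ∃ v : V → ℝ, v ≠ 0 ∧ (lapMat G).mulVec v = μ • v

/-- The induced subgraph of `G` on the complement of the vertex `i` (i.e. `G ∖ i`). -/
def deleteVert {V : Type*} (G : SimpleGraph V) (i : V) : SimpleGraph {v : V // v ≠ i} :=
  SimpleGraph.comap Subtype.val G

/-- The cycle graph on `ℤ/nℤ`, where `i` is adjacent to `i ± 1`. -/
def cycleG (n : ℕ) : SimpleGraph (ZMod n) where
  Adj x y := x ≠ y ∧ (x - y = 1 ∨ y - x = 1)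
  symm := ⟨by rintro x y ⟨hxy, h⟩; exact ⟨hxy.symm, h.symm⟩⟩
  loopless := ⟨by rintro x ⟨hx, _⟩; exact hx rfl⟩

/-- The inclusion matrix from `h`-subsets to `k`-subsets: rows indexed by `k`-subsets `A`,
columns by `h`-subsets `X`, with entry `1` if `X ⊆ A` and `0` otherwise. -/
def inclMatrix (V : Type*) [Fintype V] [DecidableEq V] (h k : ℕ) :
    Matrix {s : Finset V // s.card = k} {s : Finset V // s.card = h} ℝ :=
  fun A X => if X.1 ⊆ A.1 then 1 else 0

/-- The `(n;k)`-binomial matrix: rows indexed by `k`-subsets `A`, columns by vertices `j`,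
with entry `1` if `j ∈ A` and `0` otherwise. -/
def binomMatrix (V : Type*) [Fintype V] [DecidableEq V] (k : ℕ) :
    Matrix {s : Finset V // s.card = k} V ℝ :=
  fun A j => if j ∈ A.1 then 1 else 0

/-- The Kneser graph `K(n,k)`. -/
def kneserGraph (n k : ℕ) : SimpleGraph {s : Finset (Fin n) // s.card = k} where
  Adj A B := A ≠ B ∧ Disjoint A.1 B.1
  symm := ⟨by rintro A B ⟨h1, h2⟩; exact ⟨h1.symm, h2.symm⟩⟩
  loopless := ⟨by rintro A ⟨h1, _⟩; exact h1 rfl⟩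


/-- The `ν × ν` tridiagonal matrix `B(z)` for odd `n = 2ν + 1`: diagonal entries
`(2, 4, …, 4, 4 - z^ν - z^{-ν})`, superdiagonal entries `-1 - z⁻¹`,
subdiagonal entries `-1 - z`. -/
def Bodd (ν : ℕ) (z : ℂ) : Matrix (Fin ν) (Fin ν) ℂ :=
  fun i j =>
    if i = j then
      (if (i : ℕ) = 0 then 2 else if (i : ℕ) = ν - 1 then 4 - z ^ ν - z⁻¹ ^ ν else 4)
    else if (j : ℕ) = (i : ℕ) + 1 then -1 - z⁻¹
    else if (i : ℕ) = (j : ℕ) + 1 then -1 - z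
    else 0

end
set_option linter.unusedSectionVars false
namespace Tok16

variable {n : ℕ} [NeZero n]

abbrev V (n : ℕ) : Type := {s : Finset (ZMod n) // s.card = 2}

abbrev TG (n : ℕ) : SimpleGraph (V n) := tokenGraph (cycleG n) 2

/-- shift by `c` on 2-subsets -/
def sh (c : ZMod n) (A : V n) : V n :=
  ⟨A.1.image (· + c), by
    rw [Finset.card_image_of_injective _ (add_left_injective c), A.2]⟩

lemma mem_sh {c x : ZMod n} {A : V n} : x ∈ (sh c A).1 ↔ x - c ∈ A.1 := by
  simp only [sh, Finset.mem_image]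
  constructor
  · rintro ⟨a, ha, rfl⟩; simpa using ha
  · intro h; exact ⟨x - c, h, by ring⟩

lemma sh_sh (c d : ZMod n) (A : V n) : sh c (sh d A) = sh (d + c) A := by
  apply Subtype.ext
  ext x
  simp [mem_sh, sub_sub, add_comm]

lemma sh_zero (A : V n) : sh 0 A = A := by
  apply Subtype.ext
  ext x
  simp [mem_sh]

lemma sh_pair (x y c : ZMod n) (p : ({x, y} : Finset (ZMod n)).card = 2)
    (q : ({x + c, y + c} : Finset (ZMod n)).card = 2) :
    sh c ⟨{x, y}, p⟩ = ⟨{x + c, y + c}, q⟩ := by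
  apply Subtype.ext
  ext z
  simp [mem_sh, sub_eq_iff_eq_add]

lemma adj_sh {A B : V n} (c : ZMod n) (h : (TG n).Adj A B) :
    (TG n).Adj (sh c A) (sh c B) := by
  obtain ⟨a, b, hab, ha, hb, hd⟩ := h
  refine ⟨a + c, b + c, ⟨?_, ?_⟩, ?_, ?_, ?_⟩
  · intro he; exact hab.1 (by linear_combination he)
  · rcases hab.2 with h | h
    · left; linear_combination h
    · right; linear_combination h
  · rw [mem_sh]; simpa using ha
  · rw [mem_sh]; simpa using hb
  · ext x
    have hx := Finset.ext_iff.mp hd (x - c)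
    simp only [Finset.mem_symmDiff, mem_sh, Finset.mem_insert, Finset.mem_singleton] at hx ⊢
    rw [hx]
    constructor
    · rintro (h | h) <;> [left; right] <;> linear_combination h
    · rintro (h | h) <;> [left; right] <;> linear_combination h

lemma adj_sh_iff {A B : V n} (c : ZMod n) :
    (TG n).Adj (sh c A) (sh c B) ↔ (TG n).Adj A B := by
  constructor
  · intro h
    have := adj_sh (-c) h
    rwa [sh_sh, sh_sh, add_neg_cancel, sh_zero, sh_zero] at this
  · exact adj_sh c

lemma sh_injective (c : ZMod n) : Function.Injective (sh (n := n) c) := by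
  intro A B h
  have : sh (-c) (sh c A) = sh (-c) (sh c B) := by rw [h]
  rwa [sh_sh, sh_sh, add_neg_cancel, sh_zero, sh_zero] at this

end Tok16
namespace Tok16
variable {n : ℕ} [NeZero n]

/-- neighbor finset with the classical instance -/
noncomputable def Nbrs (A : V n) : Finset (V n) :=
  letI := Classical.decRel (TG n).Adj
  Finset.univ.filter (fun B => (TG n).Adj A B)

lemma mem_Nbrs {A B : V n} : B ∈ Nbrs A ↔ (TG n).Adj A B := by
  letI := Classical.decRel (TG n).Adj
  simp [Nbrs]

lemma lap_apply (y : V n → ℂ) (A : V n) :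
    (lapMatC (TG n)).mulVec y A =
      (Nbrs A).card * y A - ∑ B ∈ Nbrs A, y B := by
  letI := Classical.decRel (TG n).Adj
  show ((TG n).lapMatrix ℂ).mulVec y A = _
  rw [SimpleGraph.lapMatrix, Matrix.sub_mulVec]
  simp only [Pi.sub_apply]
  congr 1
  · rw [SimpleGraph.degMatrix, Matrix.mulVec_diagonal]
    congr 2
    rw [SimpleGraph.degree, SimpleGraph.neighborFinset_eq_filter]
    rfl
  · rw [SimpleGraph.adjMatrix_mulVec_apply, SimpleGraph.neighborFinset_eq_filter]
    rfl
end Tok16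
namespace Tok16
variable {n : ℕ} [NeZero n]

lemma Nbrs_sh (c : ZMod n) (A : V n) : Nbrs (sh c A) = (Nbrs A).image (sh c) := by
  ext B
  simp only [mem_Nbrs, Finset.mem_image]
  constructor
  · intro h
    refine ⟨sh (-c) B, ?_, by rw [sh_sh, neg_add_cancel, sh_zero]⟩
    rw [← adj_sh_iff c, sh_sh, neg_add_cancel, sh_zero]
    exact h
  · rintro ⟨B', hB', rfl⟩
    exact adj_sh c hB'

lemma lap_shift (y : V n → ℂ) (c : ZMod n) (A : V n) :
    (lapMatC (TG n)).mulVec (fun A => y (sh c A)) A =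
      (lapMatC (TG n)).mulVec y (sh c A) := by
  rw [lap_apply, lap_apply, Nbrs_sh,
    Finset.card_image_of_injective _ (sh_injective c),
    Finset.sum_image (fun x _ y _ h => sh_injective c h)]

lemma eigen_shift {lam : ℂ} {w : V n → ℂ}
    (heig : (lapMatC (TG n)).mulVec w = lam • w) (c : ZMod n) :
    (lapMatC (TG n)).mulVec (fun A => w (sh c A)) = lam • (fun A => w (sh c A)) := by
  funext A
  rw [lap_shift, heig]
  rfl

variable (w : V n → ℂ)

/-- Fourier component of w at ζ. -/
noncomputable def yf (ζ : ℂ) (A : V n) : ℂ :=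
  ∑ j ∈ Finset.range n, ζ⁻¹ ^ j * w (sh ((j : ℕ) : ZMod n) A)

lemma yf_eq_sum_fun (ζ : ℂ) :
    yf w ζ = ∑ j ∈ Finset.range n, ζ⁻¹ ^ j • (fun A => w (sh ((j : ℕ) : ZMod n) A)) := by
  funext A
  simp [yf]

lemma eigen_yf {lam : ℂ} (heig : (lapMatC (TG n)).mulVec w = lam • w) (ζ : ℂ) :
    (lapMatC (TG n)).mulVec (yf w ζ) = lam • yf w ζ := by
  rw [yf_eq_sum_fun]
  have hlin : (lapMatC (TG n)).mulVec
      (∑ j ∈ Finset.range n, ζ⁻¹ ^ j • (fun A => w (sh ((j : ℕ) : ZMod n) A)))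
      = ∑ j ∈ Finset.range n,
          ζ⁻¹ ^ j • (lapMatC (TG n)).mulVec (fun A => w (sh ((j : ℕ) : ZMod n) A)) := by
    show (lapMatC (TG n)).mulVecLin _ = _
    rw [map_sum]
    exact Finset.sum_congr rfl (fun j _ => (lapMatC (TG n)).mulVecLin.map_smul _ _)
  rw [hlin, Finset.smul_sum]
  refine Finset.sum_congr rfl (fun j _ => ?_)
  rw [eigen_shift heig, smul_comm]

lemma yf_shift {ζ : ℂ} (hζ : ζ ^ n = 1) (A : V n) :
    yf w ζ (sh 1 A) = ζ * yf w ζ A := by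
  have hζ0 : ζ ≠ 0 := by
    intro h; rw [h, zero_pow (NeZero.ne n)] at hζ; exact zero_ne_one hζ
  have hinv : ζ⁻¹ ^ n = 1 := by rw [inv_pow, hζ, inv_one]
  have key : ∀ j : ℕ, sh ((j : ℕ) : ZMod n) (sh 1 A) = sh (((j + 1 : ℕ)) : ZMod n) A := by
    intro j
    rw [sh_sh]
    congr 1
    push_cast
    ring
  calc yf w ζ (sh 1 A) = ∑ j ∈ Finset.range n, ζ⁻¹ ^ j * w (sh (((j+1 : ℕ)) : ZMod n) A) := by
        simp only [yf, key]
    _ = ζ * ∑ j ∈ Finset.range n, ζ⁻¹ ^ (j+1) * w (sh (((j+1 : ℕ)) : ZMod n) A) := by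
        rw [Finset.mul_sum]
        congr 1; funext j
        rw [pow_succ, ← mul_assoc]
        congr 1
        rw [mul_comm ζ, mul_assoc, inv_mul_cancel₀ hζ0, mul_one]
    _ = ζ * yf w ζ A := by
        congr 1
        have h1 : (∑ j ∈ Finset.range n, ζ⁻¹ ^ (j+1) * w (sh (((j+1 : ℕ)) : ZMod n) A))
            + ζ⁻¹ ^ 0 * w (sh ((0 : ℕ) : ZMod n) A)
            = (∑ j ∈ Finset.range n, ζ⁻¹ ^ j * w (sh ((j : ℕ) : ZMod n) A))
            + ζ⁻¹ ^ n * w (sh ((n : ℕ) : ZMod n) A) := by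
          rw [← Finset.sum_range_succ' (fun j => ζ⁻¹ ^ j * w (sh ((j : ℕ) : ZMod n) A)) n,
            Finset.sum_range_succ]
        have h2 : ζ⁻¹ ^ n * w (sh ((n : ℕ) : ZMod n) A) = ζ⁻¹ ^ 0 * w (sh ((0 : ℕ) : ZMod n) A) := by
          rw [hinv, pow_zero]
          congr 2
          simp
        rw [h2] at h1
        exact add_right_cancel h1

lemma yf_shift_pow {ζ : ℂ} (hζ : ζ ^ n = 1) (j : ℕ) (A : V n) :
    yf w ζ (sh ((j : ℕ) : ZMod n) A) = ζ ^ j * yf w ζ A := by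
  induction j with
  | zero => simp [sh_zero]
  | succ k ih =>
    have : sh (((k+1 : ℕ)) : ZMod n) A = sh 1 (sh ((k : ℕ) : ZMod n) A) := by
      rw [sh_sh]; congr 1; push_cast; ring
    rw [this, yf_shift w hζ, ih, pow_succ]
    ring

end Tok16
namespace Tok16
variable {n : ℕ} [NeZero n]

lemma exists_good_zeta (w : V n → ℂ) (hw : w ≠ 0) : ∃ ζ : ℂ, ζ ^ n = 1 ∧ yf w ζ ≠ 0 := by
  by_contra hcon
  push_neg at hcon
  set ω := Complex.exp (2 * Real.pi * Complex.I / n) with hωdef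
  have hprim : IsPrimitiveRoot ω n := Complex.isPrimitiveRoot_exp n (NeZero.ne n)
  have hprim' : IsPrimitiveRoot ω⁻¹ n := hprim.inv
  apply hw
  funext A
  have h0 : ∀ t ∈ Finset.range n, yf w (ω ^ t) A = 0 := by
    intro t _
    have hz : (ω ^ t) ^ n = 1 := by
      rw [← pow_mul, mul_comm, pow_mul, hprim.pow_eq_one, one_pow]
    rw [hcon _ hz]
    rfl
  have hsum : ∑ t ∈ Finset.range n, yf w (ω ^ t) A = 0 := Finset.sum_eq_zero h0
  have hswap : ∑ t ∈ Finset.range n, yf w (ω ^ t) A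
      = ∑ j ∈ Finset.range n,
          (∑ t ∈ Finset.range n, (ω⁻¹ ^ j) ^ t) * w (sh ((j : ℕ) : ZMod n) A) := by
    simp only [yf]
    rw [Finset.sum_comm]
    refine Finset.sum_congr rfl fun j _ => ?_
    rw [Finset.sum_mul]
    refine Finset.sum_congr rfl fun t _ => ?_
    congr 1
    rw [← inv_pow, ← pow_mul, ← pow_mul, mul_comm]
  rw [hswap] at hsum
  have hn0 : 0 < n := Nat.pos_of_ne_zero (NeZero.ne n)
  have hside : ∀ j ∈ Finset.range n, j ≠ 0 →
      (∑ t ∈ Finset.range n, (ω⁻¹ ^ j) ^ t) * w (sh ((j : ℕ) : ZMod n) A) = 0 := by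
    intro j hj hj0
    have hz1 : ω⁻¹ ^ j ≠ 1 := by
      intro h
      have hdvd := (hprim'.pow_eq_one_iff_dvd j).mp h
      exact hj0 (Nat.eq_zero_of_dvd_of_lt hdvd (Finset.mem_range.mp hj))
    have hzn : (ω⁻¹ ^ j) ^ n = 1 := by
      rw [← pow_mul, mul_comm, pow_mul, hprim'.pow_eq_one, one_pow]
    have : ∑ t ∈ Finset.range n, (ω⁻¹ ^ j) ^ t = 0 := by
      rw [geom_sum_eq hz1 n, hzn, sub_self, zero_div]
    rw [this, zero_mul]
  rw [Finset.sum_eq_single_of_mem 0 (Finset.mem_range.mpr hn0) hside] at hsum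
  simp only [pow_zero, one_pow, Finset.sum_const, Finset.card_range, nsmul_eq_mul, mul_one,
    Nat.cast_zero, sh_zero] at hsum
  rcases mul_eq_zero.mp hsum with h | h
  · exact absurd h (Nat.cast_ne_zero.mpr (NeZero.ne n))
  · exact h

lemma cast_inj' {a b : ℕ} (ha : a < n) (hb : b < n) : ((a : ZMod n) = (b : ZMod n)) ↔ a = b := by
  constructor
  · intro h
    have := congrArg ZMod.val h
    rwa [ZMod.val_cast_of_lt ha, ZMod.val_cast_of_lt hb] at this
  · rintro rfl; rfl

/-- vertex given by a pair -/
def pairV (a b : ZMod n) (h : a ≠ b) : V n := ⟨{a, b}, Finset.card_pair h⟩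

end Tok16
namespace Tok16
variable {n : ℕ} [NeZero n]

lemma adj_iff (hn5 : 5 ≤ n) (A B : V n) :
    (TG n).Adj A B ↔ ∃ a ∈ A.1, ∃ e : ZMod n, (e = 1 ∨ e = -1) ∧ a + e ∉ A.1 ∧
      B.1 = insert (a + e) (A.1.erase a) := by
  have h10 : (1 : ZMod n) ≠ 0 := by
    have := (cast_inj' (n := n) (a := 1) (b := 0) (by omega) (by omega))
    simpa using fun h => by simpa using this.mp (by simpa using h)
  constructor
  · rintro ⟨a, b, ⟨hne, hd⟩, ha, hb, hsd⟩
    have hbA : b ∉ A.1 := by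
      have hmem : b ∈ symmDiff A.1 B.1 := by rw [hsd]; simp
      rcases Finset.mem_symmDiff.mp hmem with ⟨_, hnb⟩ | ⟨_, hnA⟩
      · exact absurd hb hnb
      · exact hnA
    have haB : a ∉ B.1 := by
      have hmem : a ∈ symmDiff A.1 B.1 := by rw [hsd]; simp
      rcases Finset.mem_symmDiff.mp hmem with ⟨_, hnb⟩ | ⟨_, hnA⟩
      · exact hnb
      · exact absurd ha hnA
    have hBeq : B.1 = insert b (A.1.erase a) := by
      ext x
      have hx := Finset.ext_iff.mp hsd x
      simp only [Finset.mem_symmDiff, Finset.mem_insert, Finset.mem_singleton] at hx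
      simp only [Finset.mem_insert, Finset.mem_erase]
      by_cases hxa : x = a
      · subst hxa
        constructor
        · intro h; exact absurd h haB
        · rintro (rfl | ⟨h, _⟩)
          · exact absurd ha hbA
          · exact absurd rfl h
      · by_cases hxb : x = b
        · subst hxb
          exact ⟨fun _ => Or.inl rfl, fun _ => hb⟩
        · have hno : ¬((x ∈ A.1 ∧ x ∉ B.1) ∨ (x ∈ B.1 ∧ x ∉ A.1)) := by
            intro h
            rcases hx.mp h with h' | h'
            exacts [hxa h', hxb h']
          push_neg at hno
          constructor
          · intro hxB
            exact Or.inr ⟨hxa, by tauto⟩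
          · rintro (rfl | ⟨_, hxA⟩)
            · exact absurd rfl hxb
            · tauto
    rcases hd with h | h
    · refine ⟨a, ha, -1, Or.inr rfl, ?_, ?_⟩
      · have : b = a + -1 := by linear_combination -h
        rwa [← this]
      · have : b = a + -1 := by linear_combination -h
        rwa [← this]
    · refine ⟨a, ha, 1, Or.inl rfl, ?_, ?_⟩
      · have : b = a + 1 := by linear_combination h
        rwa [← this]
      · have : b = a + 1 := by linear_combination h
        rwa [← this]
  · rintro ⟨a, ha, e, he, hnb, hB⟩
    have he0 : e ≠ 0 := by
      rcases he with rfl | rfl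
      · exact h10
      · intro h; apply h10; linear_combination -h
    have hne : a ≠ a + e := fun h => he0 (by linear_combination -h)
    refine ⟨a, a + e, ⟨hne, ?_⟩, ha, by rw [hB]; simp, ?_⟩
    · rcases he with rfl | rfl
      · right; ring
      · left; ring
    · ext x
      simp only [Finset.mem_symmDiff, hB, Finset.mem_insert, Finset.mem_erase,
        Finset.mem_singleton]
      by_cases hxa : x = a
      · subst hxa
        simp [ha, hne, Ne.symm hne]
      · by_cases hxb : x = a + e
        · subst hxb
          simp [hnb, Ne.symm hne]
        · simp [hxa, hxb]

end Tok16
namespace Tok16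

lemma Bodd_mulVec (ν : ℕ) (z : ℂ) (f : Fin ν → ℂ) (i : Fin ν) :
    (Bodd ν z).mulVec f i =
      (if (i : ℕ) = 0 then 2 else if (i : ℕ) = ν - 1 then 4 - z ^ ν - z⁻¹ ^ ν else 4) * f i
      + (if hlt : (i : ℕ) + 1 < ν then (-1 - z⁻¹) * f ⟨(i : ℕ) + 1, hlt⟩ else 0)
      + (if hpos : 0 < (i : ℕ) then (-1 - z) * f ⟨(i : ℕ) - 1, by omega⟩ else 0) := by
  have hdec : ∀ j : Fin ν, Bodd ν z i j =
      (if j = i then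
        (if (i : ℕ) = 0 then 2 else if (i : ℕ) = ν - 1 then 4 - z ^ ν - z⁻¹ ^ ν else 4) else 0)
      + (if (j : ℕ) = (i : ℕ) + 1 then (-1 - z⁻¹) else 0)
      + (if (i : ℕ) = (j : ℕ) + 1 then (-1 - z) else 0) := by
    intro j
    by_cases hji : i = j
    · subst hji
      simp [Bodd]
    · have hji' : ¬ (j = i) := fun h => hji h.symm
      by_cases h2 : (j : ℕ) = (i : ℕ) + 1
      · have h3 : ¬ ((i : ℕ) = (j : ℕ) + 1) := by omega
        have h6 : ¬ ((i : ℕ) = (i : ℕ) + 1 + 1) := by omega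
        simp [Bodd, hji, hji', h2, h3, h6]
      · by_cases h3 : (i : ℕ) = (j : ℕ) + 1
        · have h7 : ¬ ((j : ℕ) = (j : ℕ) + 1 + 1) := by omega
          simp [Bodd, hji, hji', h2, h3, h7]
        · simp [Bodd, hji, hji', h2, h3]
  show ∑ j, Bodd ν z i j * f j = _
  simp only [hdec, add_mul, Finset.sum_add_distrib, ite_mul, zero_mul]
  congr 1
  · congr 1
    · simp
    · by_cases hlt : (i : ℕ) + 1 < ν
      · have hcond : ∀ j : Fin ν, ((j : ℕ) = (i : ℕ) + 1) = (j = ⟨(i : ℕ) + 1, hlt⟩) := by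
          intro j
          simp [Fin.ext_iff]
        simp only [hcond]
        simp [hlt]
      · rw [dif_neg hlt]
        apply Finset.sum_eq_zero
        intro j _
        have : ¬ ((j : ℕ) = (i : ℕ) + 1) := by omega
        simp [this]
  · by_cases hpos : 0 < (i : ℕ)
    · have hcond : ∀ j : Fin ν, ((i : ℕ) = (j : ℕ) + 1) = (j = ⟨(i : ℕ) - 1, by omega⟩) := by
        intro j
        simp only [Fin.ext_iff]
        exact propext (by omega)
      simp only [hcond]
      simp [hpos]
    · rw [dif_neg hpos]
      apply Finset.sum_eq_zero
      intro j _
      have : ¬ ((i : ℕ) = (j : ℕ) + 1) := by omega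
      simp [this]

end Tok16
namespace Tok16
variable {n ν : ℕ} [NeZero n]

lemma cast_add_eq {a b c : ℕ} (habc : a + b = c ∨ a + b = c + n) :
    (a : ZMod n) + (b : ZMod n) = (c : ZMod n) := by
  rcases habc with hh | hh
  · rw [← Nat.cast_add, hh]
  · rw [← Nat.cast_add, hh]
    push_cast [ZMod.natCast_self]
    ring

lemma cast_ne {a b : ℕ} (ha : a < n) (hb : b < n) (h : a ≠ b) :
    (a : ZMod n) ≠ (b : ZMod n) := fun he => h ((cast_inj' ha hb).mp he)

lemma pairN_ne {a b c d : ℕ} (ha : a < n) (hb : b < n) (hc : c < n) (hd : d < n)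
    (hcond : ¬((a = c ∧ b = d) ∨ (a = d ∧ b = c))) :
    ({(a : ZMod n), (b : ZMod n)} : Finset (ZMod n)) ≠ {(c : ZMod n), (d : ZMod n)} := by
  intro he
  have h1 : (a : ZMod n) = c ∨ (a : ZMod n) = d := by
    have := Finset.ext_iff.mp he (a : ZMod n)
    simpa using this.mp (by simp)
  have h2 : (b : ZMod n) = c ∨ (b : ZMod n) = d := by
    have := Finset.ext_iff.mp he (b : ZMod n)
    simpa using this.mp (by simp)
  have h3 : (c : ZMod n) = a ∨ (c : ZMod n) = b := by
    have := Finset.ext_iff.mp he (c : ZMod n)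
    simpa using this.mpr (by simp)
  have h4 : (d : ZMod n) = a ∨ (d : ZMod n) = b := by
    have := Finset.ext_iff.mp he (d : ZMod n)
    simpa using this.mpr (by simp)
  rw [cast_inj' ha hc, cast_inj' ha hd] at h1
  rw [cast_inj' hb hc, cast_inj' hb hd] at h2
  rw [cast_inj' hc ha, cast_inj' hc hb] at h3
  rw [cast_inj' hd ha, cast_inj' hd hb] at h4
  omega

lemma adj_pair0_iff (hν : 2 ≤ ν) (hn : n = 2 * ν + 1) {h : ℕ} (h1 : 1 ≤ h) (h2 : h ≤ ν)
    (hne : (0 : ZMod n) ≠ ((h : ℕ) : ZMod n)) (B : V n) :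
    (TG n).Adj ⟨{0, (h : ZMod n)}, Finset.card_pair hne⟩ B ↔
      (2 ≤ h ∧ B.1 = {((1 : ℕ) : ZMod n), (h : ZMod n)}) ∨
      B.1 = {((n - 1 : ℕ) : ZMod n), (h : ZMod n)} ∨
      B.1 = {(0 : ZMod n), ((h + 1 : ℕ) : ZMod n)} ∨
      (2 ≤ h ∧ B.1 = {(0 : ZMod n), ((h - 1 : ℕ) : ZMod n)}) := by
  have hn5 : 5 ≤ n := by omega
  have hz : (0 : ZMod n) = ((0 : ℕ) : ZMod n) := by simp
  have hone : (1 : ZMod n) = ((1 : ℕ) : ZMod n) := by simp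
  have hneg : (-1 : ZMod n) = ((n - 1 : ℕ) : ZMod n) := by
    have : ((n - 1 : ℕ) : ZMod n) + ((1 : ℕ) : ZMod n) = ((0 : ℕ) : ZMod n) :=
      cast_add_eq (Or.inr (by omega))
    simp only [Nat.cast_one, Nat.cast_zero] at this
    linear_combination -this
  have heh1 : (h : ZMod n) + 1 = ((h + 1 : ℕ) : ZMod n) := by push_cast; ring
  have hehm1 : (h : ZMod n) + (-1) = ((h - 1 : ℕ) : ZMod n) := by
    have : ((h - 1 : ℕ) : ZMod n) + ((1 : ℕ) : ZMod n) = ((h : ℕ) : ZMod n) :=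
      cast_add_eq (Or.inl (by omega))
    simp only [Nat.cast_one] at this
    linear_combination -this
  -- erase computations
  have her0 : ({0, (h : ZMod n)} : Finset (ZMod n)).erase 0 = {(h : ZMod n)} := by
    apply Finset.erase_insert
    simpa using hne
  have herh : ({0, (h : ZMod n)} : Finset (ZMod n)).erase (h : ZMod n) = {0} := by
    rw [Finset.pair_comm]
    apply Finset.erase_insert
    simpa using hne.symm
  rw [adj_iff hn5]
  constructor
  · rintro ⟨a, ha, e, he, hnb, hB⟩
    simp only [Finset.mem_insert, Finset.mem_singleton] at ha
    rcases ha with rfl | rfl <;> rcases he with rfl | rfl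
    · -- a = 0, e = 1
      rw [zero_add] at hnb hB
      rw [her0] at hB
      refine Or.inl ⟨?_, by rw [hB, ← hone]⟩
      simp only [Finset.mem_insert, Finset.mem_singleton, not_or] at hnb
      by_contra hcon
      have : h = 1 := by omega
      subst this
      exact hnb.2 (by simpa using hone.symm)
    · -- a = 0, e = -1
      rw [zero_add] at hnb hB
      rw [her0] at hB
      refine Or.inr (Or.inl ?_)
      rw [hB, ← hneg]
    · -- a = h, e = 1
      rw [herh, heh1] at hB
      refine Or.inr (Or.inr (Or.inl ?_))
      rw [hB, Finset.pair_comm]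
    · -- a = h, e = -1
      rw [herh, hehm1] at hB
      refine Or.inr (Or.inr (Or.inr ⟨?_, by rw [hB, Finset.pair_comm]⟩))
      simp only [Finset.mem_insert, Finset.mem_singleton, not_or, hehm1] at hnb
      by_contra hcon
      have : h = 1 := by omega
      subst this
      exact hnb.1 (by simpa using hz.symm)
  · rintro (⟨hh2, hB⟩ | hB | hB | ⟨hh2, hB⟩)
    · refine ⟨0, by simp, 1, Or.inl rfl, ?_, ?_⟩
      · rw [zero_add]
        simp only [Finset.mem_insert, Finset.mem_singleton, not_or]
        exact ⟨by simpa using (cast_ne (n := n) (a := 1) (b := 0) (by omega) (by omega) (by omega)),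
          by rw [hone]; exact cast_ne (n := n) (a := 1) (b := h) (by omega) (by omega) (by omega)⟩
      · rw [zero_add, her0, hB, ← hone]
    · refine ⟨0, by simp, -1, Or.inr rfl, ?_, ?_⟩
      · rw [zero_add, hneg]
        simp only [Finset.mem_insert, Finset.mem_singleton, not_or]
        exact ⟨by simpa using (cast_ne (n := n) (a := n - 1) (b := 0) (by omega) (by omega) (by omega)),
          cast_ne (n := n) (a := n - 1) (b := h) (by omega) (by omega) (by omega)⟩
      · rw [zero_add, her0, hB, ← hneg]
    · refine ⟨(h : ZMod n), by simp, 1, Or.inl rfl, ?_, ?_⟩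
      · rw [heh1]
        simp only [Finset.mem_insert, Finset.mem_singleton, not_or]
        exact ⟨by simpa using (cast_ne (n := n) (a := h + 1) (b := 0) (by omega) (by omega) (by omega)),
          cast_ne (n := n) (a := h + 1) (b := h) (by omega) (by omega) (by omega)⟩
      · rw [heh1, herh, hB, Finset.pair_comm]
    · refine ⟨(h : ZMod n), by simp, -1, Or.inr rfl, ?_, ?_⟩
      · rw [hehm1]
        simp only [Finset.mem_insert, Finset.mem_singleton, not_or]
        exact ⟨by simpa using (cast_ne (n := n) (a := h - 1) (b := 0) (by omega) (by omega) (by omega)),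
          cast_ne (n := n) (a := h - 1) (b := h) (by omega) (by omega) (by omega)⟩
      · rw [hehm1, herh, hB, Finset.pair_comm]

end Tok16
namespace Tok16
variable {n ν : ℕ} [NeZero n]

lemma Bf_eigen (hν : 2 ≤ ν) (hn : n = 2 * ν + 1) {ζ lam : ℂ} (hζ : ζ ^ n = 1)
    {y : V n → ℂ} {f : Fin ν → ℂ}
    (hyeig : (lapMatC (TG n)).mulVec y = lam • y)
    (hrep : ∀ (j h : ℕ), 1 ≤ h → ∀ (h2 : h ≤ ν), ∀ A : V n,
      A.1 = {((j : ℕ) : ZMod n), ((j : ℕ) : ZMod n) + ((h : ℕ) : ZMod n)} →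
      y A = f ⟨h - 1, by omega⟩ * ζ ^ j) :
    (Bodd ν ζ).mulVec f = lam • f := by
  have hn5 : 5 ≤ n := by omega
  have hζ0 : ζ ≠ 0 := by
    intro h0; rw [h0, zero_pow (NeZero.ne n)] at hζ; exact zero_ne_one hζ
  have hζinv : ζ⁻¹ = ζ ^ (n - 1) := by
    apply inv_eq_of_mul_eq_one_right
    rw [← pow_succ']
    rw [show n - 1 + 1 = n by omega]
    exact hζ
  have hζinv2 : ζ⁻¹ ^ ν = ζ ^ (ν + 1) := by
    rw [inv_pow]
    apply inv_eq_of_mul_eq_one_right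
    rw [← pow_add, show ν + (ν + 1) = n by omega]
    exact hζ
  funext i
  have hiν : (i : ℕ) < ν := i.isLt
  set h : ℕ := (i : ℕ) + 1 with hhdef
  have h1 : 1 ≤ h := by omega
  have h2 : h ≤ ν := by omega
  have hne0 : (0 : ZMod n) ≠ ((h : ℕ) : ZMod n) := by
    simpa using (cast_ne (n := n) (a := 0) (b := h) (by omega) (by omega) (by omega))
  set A0 : V n := ⟨{0, (h : ZMod n)}, Finset.card_pair hne0⟩ with hA0def
  have hyA0 : y A0 = f i := by
    have hval : A0.1 = {((0 : ℕ) : ZMod n), ((0 : ℕ) : ZMod n) + ((h : ℕ) : ZMod n)} := by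
      simp [hA0def]
    rw [hrep 0 h h1 h2 A0 hval, pow_zero, mul_one]
    exact congrArg f (Fin.ext (by simp only [Fin.val_mk]; try omega))
  have hlam : ((Nbrs A0).card : ℂ) * y A0 - ∑ B ∈ Nbrs A0, y B = lam * f i := by
    rw [← lap_apply, congrFun hyeig A0, Pi.smul_apply, smul_eq_mul, hyA0]
  rw [Bodd_mulVec]
  -- the four candidate neighbours
  have hc1n : (1 : ℕ) < n := by omega
  have hchn : h < n := by omega
  have hcn1 : n - 1 < n := by omega
  have hch1 : h + 1 < n := by omega
  have hchm : h - 1 < n := by omega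
  have hc0 : (0 : ℕ) < n := by omega
  set P2 : V n := ⟨{((n - 1 : ℕ) : ZMod n), ((h : ℕ) : ZMod n)},
    Finset.card_pair (cast_ne (n := n) hcn1 hchn (by omega))⟩ with hP2def
  set P3 : V n := ⟨{((0 : ℕ) : ZMod n), ((h + 1 : ℕ) : ZMod n)},
    Finset.card_pair (cast_ne (n := n) hc0 hch1 (by omega))⟩ with hP3def
  by_cases hA : h = 1
  · -- first row
    have hnot2 : ¬ (2 ≤ h) := by omega
    have hNbrs : Nbrs A0 = {P2, P3} := by
      ext B
      rw [mem_Nbrs, hA0def, adj_pair0_iff hν hn h1 h2 hne0]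
      simp only [hnot2, false_and, false_or, or_false, Finset.mem_insert,
        Finset.mem_singleton, Subtype.ext_iff, hP2def, hP3def, Nat.cast_zero]
    have hP2P3 : P2 ≠ P3 := by
      intro he
      exact pairN_ne (n := n) hcn1 hchn hc0 hch1 (by omega) (Subtype.ext_iff.mp he)
    have hcard : (Nbrs A0).card = 2 := by
      rw [hNbrs, Finset.card_insert_of_notMem (by simpa using hP2P3), Finset.card_singleton]
    have hsum : ∑ B ∈ Nbrs A0, y B = y P2 + y P3 := by
      rw [hNbrs, Finset.sum_insert (by simpa using hP2P3), Finset.sum_singleton]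
    have hv2 : y P2 = f ⟨h, by omega⟩ * ζ ^ (n - 1) := by
      have hval : P2.1 = {((n - 1 : ℕ) : ZMod n),
          ((n - 1 : ℕ) : ZMod n) + ((h + 1 : ℕ) : ZMod n)} := by
        rw [cast_add_eq (a := n - 1) (b := h + 1) (c := h) (Or.inr (by omega))]
      rw [hrep (n - 1) (h + 1) (by omega) (by omega) P2 hval]
      exact congrArg (· * ζ ^ (n - 1)) (congrArg f (Fin.ext (by simp only [Fin.val_mk]; try omega)))
    have hv3 : y P3 = f ⟨h, by omega⟩ * ζ ^ 0 := by
      have hval : P3.1 = {((0 : ℕ) : ZMod n),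
          ((0 : ℕ) : ZMod n) + ((h + 1 : ℕ) : ZMod n)} := by
        rw [cast_add_eq (a := 0) (b := h + 1) (c := h + 1) (Or.inl (by omega))]
      rw [hrep 0 (h + 1) (by omega) (by omega) P3 hval]
      exact congrArg (· * ζ ^ 0) (congrArg f (Fin.ext (by simp only [Fin.val_mk]; try omega)))
    have hfinal : lam * f i = 2 * f i - (f ⟨h, by omega⟩ * ζ ^ (n - 1)
        + f ⟨h, by omega⟩ * ζ ^ 0) := by
      rw [← hlam, hcard, hsum, hyA0, hv2, hv3]
      norm_num
    have hi0 : (i : ℕ) = 0 := by omega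
    rw [if_pos hi0, dif_pos (show (i : ℕ) + 1 < ν by omega), dif_neg (by omega)]
    have hidx : f ⟨(i : ℕ) + 1, by omega⟩ = f ⟨h, by omega⟩ := congrArg f (Fin.ext (by simp only [Fin.val_mk]; try omega))
    rw [hidx, Pi.smul_apply, smul_eq_mul, hζinv]
    rw [hfinal]
    ring
  · -- lower rows, need P4 too
    have h2' : 2 ≤ h := by omega
    set P1 : V n := ⟨{((1 : ℕ) : ZMod n), ((h : ℕ) : ZMod n)},
      Finset.card_pair (cast_ne (n := n) hc1n hchn (by omega))⟩ with hP1def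
    set P4 : V n := ⟨{((0 : ℕ) : ZMod n), ((h - 1 : ℕ) : ZMod n)},
      Finset.card_pair (cast_ne (n := n) hc0 hchm (by omega))⟩ with hP4def
    have hNbrs : Nbrs A0 = {P1, P2, P3, P4} := by
      ext B
      rw [mem_Nbrs, hA0def, adj_pair0_iff hν hn h1 h2 hne0]
      simp only [h2', true_and, Finset.mem_insert, Finset.mem_singleton, Subtype.ext_iff,
        hP1def, hP2def, hP3def, hP4def, Nat.cast_zero]
    have hne12 : P1 ≠ P2 := fun he =>
      pairN_ne (n := n) hc1n hchn hcn1 hchn (by omega) (Subtype.ext_iff.mp he)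
    have hne13 : P1 ≠ P3 := fun he =>
      pairN_ne (n := n) hc1n hchn hc0 hch1 (by omega) (Subtype.ext_iff.mp he)
    have hne14 : P1 ≠ P4 := fun he =>
      pairN_ne (n := n) hc1n hchn hc0 hchm (by omega) (Subtype.ext_iff.mp he)
    have hne23 : P2 ≠ P3 := fun he =>
      pairN_ne (n := n) hcn1 hchn hc0 hch1 (by omega) (Subtype.ext_iff.mp he)
    have hne24 : P2 ≠ P4 := fun he =>
      pairN_ne (n := n) hcn1 hchn hc0 hchm (by omega) (Subtype.ext_iff.mp he)
    have hne34 : P3 ≠ P4 := fun he =>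
      pairN_ne (n := n) hc0 hch1 hc0 hchm (by omega) (Subtype.ext_iff.mp he)
    have hm1 : P1 ∉ ({P2, P3, P4} : Finset (V n)) := by
      simp only [Finset.mem_insert, Finset.mem_singleton]
      push_neg
      exact ⟨hne12, hne13, hne14⟩
    have hm2 : P2 ∉ ({P3, P4} : Finset (V n)) := by
      simp only [Finset.mem_insert, Finset.mem_singleton]
      push_neg
      exact ⟨hne23, hne24⟩
    have hm3 : P3 ∉ ({P4} : Finset (V n)) := by simpa using hne34
    have hcard : (Nbrs A0).card = 4 := by
      rw [hNbrs, Finset.card_insert_of_notMem hm1, Finset.card_insert_of_notMem hm2,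
        Finset.card_insert_of_notMem hm3, Finset.card_singleton]
    have hsum : ∑ B ∈ Nbrs A0, y B = y P1 + (y P2 + (y P3 + y P4)) := by
      rw [hNbrs, Finset.sum_insert hm1, Finset.sum_insert hm2, Finset.sum_insert hm3,
        Finset.sum_singleton]
    have hv1 : y P1 = f ⟨h - 2, by omega⟩ * ζ ^ 1 := by
      have hval : P1.1 = {((1 : ℕ) : ZMod n),
          ((1 : ℕ) : ZMod n) + ((h - 1 : ℕ) : ZMod n)} := by
        rw [cast_add_eq (a := 1) (b := h - 1) (c := h) (Or.inl (by omega))]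
      rw [hrep 1 (h - 1) (by omega) (by omega) P1 hval]
      exact congrArg (· * ζ ^ 1) (congrArg f (Fin.ext (by simp only [Fin.val_mk]; try omega)))
    have hv4 : y P4 = f ⟨h - 2, by omega⟩ * ζ ^ 0 := by
      have hval : P4.1 = {((0 : ℕ) : ZMod n),
          ((0 : ℕ) : ZMod n) + ((h - 1 : ℕ) : ZMod n)} := by
        rw [cast_add_eq (a := 0) (b := h - 1) (c := h - 1) (Or.inl (by omega))]
      rw [hrep 0 (h - 1) (by omega) (by omega) P4 hval]
      exact congrArg (· * ζ ^ 0) (congrArg f (Fin.ext (by simp only [Fin.val_mk]; try omega)))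
    have hidxm : f ⟨(i : ℕ) - 1, by omega⟩ = f ⟨h - 2, by omega⟩ :=
      congrArg f (Fin.ext (by simp only [Fin.val_mk]; try omega))
    by_cases hB : h = ν
    · -- last row
      have hv2 : y P2 = f i * ζ ^ ν := by
        have hval : P2.1 = {((ν : ℕ) : ZMod n),
            ((ν : ℕ) : ZMod n) + ((ν : ℕ) : ZMod n)} := by
          show ({((n - 1 : ℕ) : ZMod n), ((h : ℕ) : ZMod n)} : Finset (ZMod n)) = _
          rw [cast_add_eq (a := ν) (b := ν) (c := n - 1) (Or.inl (by omega))]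
          rw [show ((h : ℕ) : ZMod n) = ((ν : ℕ) : ZMod n) from by rw [hB]]
          rw [Finset.pair_comm]
        rw [hrep ν ν (by omega) (by omega) P2 hval]
        exact congrArg (· * ζ ^ ν) (congrArg f (Fin.ext (by simp only [Fin.val_mk]; try omega)))
      have hv3 : y P3 = f i * ζ ^ (ν + 1) := by
        have hval : P3.1 = {((ν + 1 : ℕ) : ZMod n),
            ((ν + 1 : ℕ) : ZMod n) + ((ν : ℕ) : ZMod n)} := by
          show ({((0 : ℕ) : ZMod n), ((h + 1 : ℕ) : ZMod n)} : Finset (ZMod n)) = _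
          rw [cast_add_eq (a := ν + 1) (b := ν) (c := 0) (Or.inr (by omega))]
          rw [show ((h + 1 : ℕ) : ZMod n) = ((ν + 1 : ℕ) : ZMod n) from by
            rw [show h + 1 = ν + 1 by omega]]
          rw [Finset.pair_comm]
        rw [hrep (ν + 1) ν (by omega) (by omega) P3 hval]
        exact congrArg (· * ζ ^ (ν + 1)) (congrArg f (Fin.ext (by simp only [Fin.val_mk]; try omega)))
      have hfinal : lam * f i = 4 * f i - (f ⟨h - 2, by omega⟩ * ζ ^ 1
          + (f i * ζ ^ ν + (f i * ζ ^ (ν + 1) + f ⟨h - 2, by omega⟩ * ζ ^ 0))) := by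
        rw [← hlam, hcard, hsum, hyA0, hv1, hv2, hv3, hv4]
        norm_num
      rw [if_neg (by omega), if_pos (show (i : ℕ) = ν - 1 by omega),
        dif_neg (by omega), dif_pos (show 0 < (i : ℕ) by omega)]
      rw [hidxm, Pi.smul_apply, smul_eq_mul, hζinv2]
      rw [hfinal]
      ring
    · -- middle rows
      have hv2 : y P2 = f ⟨h, by omega⟩ * ζ ^ (n - 1) := by
        have hval : P2.1 = {((n - 1 : ℕ) : ZMod n),
            ((n - 1 : ℕ) : ZMod n) + ((h + 1 : ℕ) : ZMod n)} := by
          rw [cast_add_eq (a := n - 1) (b := h + 1) (c := h) (Or.inr (by omega))]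
        rw [hrep (n - 1) (h + 1) (by omega) (by omega) P2 hval]
        exact congrArg (· * ζ ^ (n - 1)) (congrArg f (Fin.ext (by simp only [Fin.val_mk]; try omega)))
      have hv3 : y P3 = f ⟨h, by omega⟩ * ζ ^ 0 := by
        have hval : P3.1 = {((0 : ℕ) : ZMod n),
            ((0 : ℕ) : ZMod n) + ((h + 1 : ℕ) : ZMod n)} := by
          rw [cast_add_eq (a := 0) (b := h + 1) (c := h + 1) (Or.inl (by omega))]
        rw [hrep 0 (h + 1) (by omega) (by omega) P3 hval]
        exact congrArg (· * ζ ^ 0) (congrArg f (Fin.ext (by simp only [Fin.val_mk]; try omega)))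
      have hfinal : lam * f i = 4 * f i - (f ⟨h - 2, by omega⟩ * ζ ^ 1
          + (f ⟨h, by omega⟩ * ζ ^ (n - 1) + (f ⟨h, by omega⟩ * ζ ^ 0
          + f ⟨h - 2, by omega⟩ * ζ ^ 0))) := by
        rw [← hlam, hcard, hsum, hyA0, hv1, hv2, hv3, hv4]
        norm_num
      have hidx : f ⟨(i : ℕ) + 1, by omega⟩ = f ⟨h, by omega⟩ := congrArg f (Fin.ext (by simp only [Fin.val_mk]; try omega))
      rw [if_neg (by omega), if_neg (by omega),
        dif_pos (show (i : ℕ) + 1 < ν by omega), dif_pos (show 0 < (i : ℕ) by omega)]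
      rw [hidx, hidxm, Pi.smul_apply, smul_eq_mul, hζinv]
      rw [hfinal]
      ring

end Tok16
noncomputable section

theorem stmt_16 {n ν : ℕ} [NeZero n] (hν : 2 ≤ ν) (hn : n = 2 * ν + 1)
    (lam : ℂ) (w : {s : Finset (ZMod n) // s.card = 2} → ℂ) (hw : w ≠ 0)
    (heig : (lapMatC (tokenGraph (cycleG n) 2)).mulVec w = lam • w) :
    ∃ (ζ : ℂ) (f : Fin ν → ℂ) (y : {s : Finset (ZMod n) // s.card = 2} → ℂ),
      ζ ^ n = 1 ∧ f ≠ 0 ∧ (Bodd ν ζ).mulVec f = lam • f ∧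
      y ≠ 0 ∧ (lapMatC (tokenGraph (cycleG n) 2)).mulVec y = lam • y ∧
      ∀ (j h : ℕ), 1 ≤ h → (hh : h ≤ ν) →
        ∀ A : {s : Finset (ZMod n) // s.card = 2},
          A.1 = {(j : ZMod n), (j : ZMod n) + (h : ZMod n)} →
          y A = f ⟨h - 1, by omega⟩ * ζ ^ j := by
  have hn5 : 5 ≤ n := by omega
  obtain ⟨ζ, hζ, hyne⟩ := Tok16.exists_good_zeta w hw
  set y : Tok16.V n → ℂ := Tok16.yf w ζ with hydef
  have hyeig : (lapMatC (Tok16.TG n)).mulVec y = lam • y := Tok16.eigen_yf w heig ζ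
  have hne : ∀ k : ℕ, 1 ≤ k → k ≤ ν → (0 : ZMod n) ≠ ((k : ℕ) : ZMod n) := fun k hk1 hk2 => by
    simpa using Tok16.cast_ne (n := n) (a := 0) (b := k) (by omega) (by omega) (by omega)
  set f : Fin ν → ℂ := fun i =>
    y ⟨{0, (((i : ℕ) + 1 : ℕ) : ZMod n)},
      Finset.card_pair (hne _ (by omega) (by omega))⟩ with hfdef
  have hrep : ∀ (j h : ℕ), 1 ≤ h → ∀ (hh : h ≤ ν), ∀ A : Tok16.V n,
      A.1 = {((j : ℕ) : ZMod n), ((j : ℕ) : ZMod n) + ((h : ℕ) : ZMod n)} →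
      y A = f ⟨h - 1, by omega⟩ * ζ ^ j := by
    intro j h h1 h2 A hA
    set P0 : Tok16.V n := ⟨{0, ((h : ℕ) : ZMod n)}, Finset.card_pair (hne h h1 h2)⟩ with hP0def
    have hshval : (Tok16.sh ((j : ℕ) : ZMod n) P0).1
        = ({0 + ((j : ℕ) : ZMod n), ((h : ℕ) : ZMod n) + ((j : ℕ) : ZMod n)} :
            Finset (ZMod n)) := by
      show ({0, ((h : ℕ) : ZMod n)} : Finset (ZMod n)).image (· + ((j : ℕ) : ZMod n)) = _
      simp
    have hAeq : A = Tok16.sh ((j : ℕ) : ZMod n) P0 := by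
      apply Subtype.ext
      rw [hA, hshval, zero_add, add_comm (((h : ℕ)) : ZMod n) (((j : ℕ)) : ZMod n)]
    have hstep : y A = ζ ^ j * y P0 := by
      rw [hAeq]
      exact Tok16.yf_shift_pow w hζ j P0
    have hfP0 : f ⟨h - 1, by omega⟩ = y P0 := by
      have hrfl : f ⟨h - 1, by omega⟩ = y ⟨{0, (((h - 1) + 1 : ℕ) : ZMod n)},
          Finset.card_pair (hne _ (by omega) (by omega))⟩ := rfl
      rw [hrfl]
      congr 1
      apply Subtype.ext
      show ({0, (((h - 1) + 1 : ℕ) : ZMod n)} : Finset (ZMod n)) = {0, ((h : ℕ) : ZMod n)}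
      rw [show (h - 1) + 1 = h by omega]
    rw [hstep, hfP0, mul_comm]
  have hfne : f ≠ 0 := by
    intro hf0
    apply hyne
    funext A
    obtain ⟨a, b, hab, hAval⟩ := Finset.card_eq_two.mp A.2
    have hcast : ∀ x : ZMod n, ((x.val : ℕ) : ZMod n) = x := ZMod.natCast_rightInverse
    have hd0 : b - a ≠ 0 := sub_ne_zero.mpr (Ne.symm hab)
    have hdpos : 1 ≤ (b - a).val := by
      rcases Nat.eq_zero_or_pos (b - a).val with h0 | h0
      · exact absurd ((ZMod.val_eq_zero _).mp h0) hd0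
      · exact h0
    have hdlt : (b - a).val < n := ZMod.val_lt _
    by_cases hc : (b - a).val ≤ ν
    · have hval : A.1 = {(((a.val : ℕ)) : ZMod n),
          (((a.val : ℕ)) : ZMod n) + ((((b - a).val : ℕ)) : ZMod n)} := by
        rw [hAval, hcast, hcast]
        have : a + (b - a) = b := by ring
        rw [this]
      rw [hrep a.val (b - a).val hdpos hc A hval, hf0]
      simp
    · have he0 : a - b ≠ 0 := sub_ne_zero.mpr hab
      have hev : (a - b).val = n - (b - a).val := by
        have : a - b = -(b - a) := by ring
        rw [this, ZMod.neg_val, if_neg hd0]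
      have he1 : 1 ≤ (a - b).val := by omega
      have he2 : (a - b).val ≤ ν := by omega
      have hval : A.1 = {(((b.val : ℕ)) : ZMod n),
          (((b.val : ℕ)) : ZMod n) + ((((a - b).val : ℕ)) : ZMod n)} := by
        rw [hAval, hcast, hcast, Finset.pair_comm]
        have : b + (a - b) = a := by ring
        rw [this]
      rw [hrep b.val (a - b).val he1 he2 A hval, hf0]
      simp
  have hBf : (Bodd ν ζ).mulVec f = lam • f := Tok16.Bf_eigen hν hn hζ hyeig hrep
  exact ⟨ζ, f, y, hζ, hfne, hBf, hyne, hyeig, fun j h h1 h2 A hA => hrep j h h1 h2 A hA⟩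

end
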